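/- arXiv:1401.1272 — 2 statements merged into one kernel-verified Lean document; each statement's English description precedes it below -/
import Mathlib

section
/- For n ≥ 2 with μ_i^+ as defined (μ_i^+ = (2n-i-1)i/2 for i ≤ n, μ_i^+ = n(n-1)/2 + (i-n)(-2n+i+1) for n+1 ≤ i ≤ 2n-2, μ_i^+ = (3n-i-1)(i-n)/2 for 2n-1 ≤ i ≤ 3n-2), the polynomial identity Σ_{i=1}^{3n-2} μ_i^+ x^i = (Σ_{i=1}^{n} x^i) · (Σ_{i=1}^{n-1} ((n-i) x^{i-1} + i x^{i+n-1})) holds in ℤ[x]. -/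
/-- The integer coefficients `μ_i^+` of the Jordan `n`-commutator expansion. -/
def muPlusZ (n i : ℕ) : ℤ :=
  if i ≤ n then (2 * (n : ℤ) - i - 1) * i / 2
  else if i ≤ 2 * n - 2 then (n : ℤ) * ((n : ℤ) - 1) / 2 + ((i : ℤ) - n) * (-2 * (n : ℤ) + i + 1)
  else (3 * (n : ℤ) - i - 1) * ((i : ℤ) - n) / 2

namespace Stmt13Aux

open Polynomial Finset

def halfsq (n : ℕ) : ℤ := (n : ℤ) * ((n : ℤ) - 1) / 2

lemma sum_Icc_eq_sum_range'' {M : Type*} [AddCommMonoid M] (f : ℕ → M) (a b : ℕ) :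
    ∑ i ∈ Finset.Icc a b, f i = ∑ i ∈ Finset.range (b + 1 - a), f (a + i) := by
  rw [← Finset.Ico_add_one_right_eq_Icc, Finset.sum_Ico_eq_sum_range]

lemma sum_range_add' {M : Type*} [AddCommMonoid M] (f : ℕ → M) (m n : ℕ) :
    ∑ i ∈ Finset.range (m + n), f i
      = (∑ i ∈ Finset.range m, f i) + ∑ i ∈ Finset.range n, f (m + i) := by
  induction n with
  | zero => simp
  | succ n ih =>
    rw [show m + (n + 1) = (m + n) + 1 by omega, Finset.sum_range_succ, ih,
      Finset.sum_range_succ, add_assoc]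

lemma Mlem (f : ℕ → ℤ) (m : ℕ) :
    (∑ i ∈ range (m + 1), C (f i) * X ^ i) * (1 - X)
      = C (f 0) - C (f m) * X ^ (m + 1)
        + ∑ i ∈ range m, C (f (i + 1) - f i) * X ^ (i + 1) := by
  induction m with
  | zero => simp; ring
  | succ m ih =>
    rw [Finset.sum_range_succ, add_mul, ih, Finset.sum_range_succ]
    simp only [map_sub]
    ring

lemma MMlem (a b : ℤ) (m : ℕ) :
    (∑ i ∈ range (m + 1), C (a + b * (i : ℤ)) * X ^ i) * (1 - X) ^ 2
      = (C a - C (a + b * (m : ℤ)) * X ^ (m + 1)) * (1 - X) + C b * (X - X ^ (m + 1)) := by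
  have hg : (∑ i ∈ range m, (X : Polynomial ℤ) ^ i) * (1 - X) = 1 - X ^ m := by
    have := geom_sum_mul (X : Polynomial ℤ) m
    linear_combination -this
  have h := Mlem (fun i => a + b * (i : ℤ)) m
  push_cast at h
  simp only [mul_zero, add_zero] at h
  have h3 : ∑ i ∈ range m, C (a + b * ((i:ℤ) + 1) - (a + b * (i:ℤ))) * X ^ (i + 1)
      = C b * X * ∑ i ∈ range m, (X : Polynomial ℤ) ^ i := by
    rw [Finset.mul_sum]
    refine Finset.sum_congr rfl fun i _ => ?_
    rw [show a + b * ((i:ℤ) + 1) - (a + b * (i:ℤ)) = b by ring]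
    ring
  rw [pow_two, ← mul_assoc, h, h3]
  linear_combination (C b * X) * hg

lemma d1 (n j : ℕ) (h : j + 1 ≤ n) :
    muPlusZ n (j + 1) - muPlusZ n j = (n : ℤ) - j - 1 := by
  unfold muPlusZ
  rw [if_pos h, if_pos (by omega : j ≤ n)]
  obtain ⟨t, ht⟩ := Int.even_mul_succ_self (j : ℤ)
  push_cast
  have hA : (2 * (n:ℤ) - ((j:ℤ) + 1) - 1) * ((j:ℤ) + 1)
      = 2 * ((n:ℤ) * j + n - j - 1 - t) := by linear_combination -ht
  have hB : (2 * (n:ℤ) - (j:ℤ) - 1) * (j:ℤ) = 2 * ((n:ℤ) * j - t) := by linear_combination -ht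
  rw [hA, hB, Int.mul_ediv_cancel_left _ (by norm_num), Int.mul_ediv_cancel_left _ (by norm_num)]
  ring

lemma d2 (n j : ℕ) (hl : n + 1 ≤ j) (hr : j + 1 ≤ 2 * n - 2) :
    muPlusZ n (j + 1) - muPlusZ n j = 2 * (j : ℤ) + 2 - 3 * n := by
  unfold muPlusZ
  rw [if_neg (by omega), if_pos hr, if_neg (by omega), if_pos (by omega)]
  push_cast
  ring

lemma d3 (n j : ℕ) (hl : 2 * n - 1 ≤ j) (hn : 2 ≤ n) :
    muPlusZ n (j + 1) - muPlusZ n j = 2 * (n : ℤ) - j - 1 := by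
  unfold muPlusZ
  rw [if_neg (by omega), if_neg (by omega), if_neg (by omega), if_neg (by omega)]
  obtain ⟨t, ht⟩ := Int.even_mul_succ_self ((j : ℤ) - n)
  push_cast
  have hA : (3 * (n:ℤ) - ((j:ℤ) + 1) - 1) * (((j:ℤ) + 1) - (n:ℤ))
      = 2 * ((((j:ℤ) + 1) - n) * ((n:ℤ) - 1) - t) := by linear_combination -ht
  have hB : (3 * (n:ℤ) - (j:ℤ) - 1) * ((j:ℤ) - (n:ℤ)) = 2 * ((n:ℤ) * ((j:ℤ) - n) - t) := by
    linear_combination -ht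
  rw [hA, hB, Int.mul_ediv_cancel_left _ (by norm_num), Int.mul_ediv_cancel_left _ (by norm_num)]
  ring

lemma V1 (n : ℕ) (h : 1 ≤ n) : muPlusZ n 1 = (n : ℤ) - 1 := by
  unfold muPlusZ
  rw [if_pos h]
  push_cast
  rw [show (2 * (n:ℤ) - 1 - 1) * 1 = 2 * ((n:ℤ) - 1) by ring]
  exact Int.mul_ediv_cancel_left _ (by norm_num)

lemma Vn (n : ℕ) : muPlusZ n n = halfsq n := by
  unfold muPlusZ halfsq
  rw [if_pos le_rfl]
  congr 1
  ring

lemma Vn1 (n : ℕ) (h : 3 ≤ n) : muPlusZ n (n + 1) = halfsq n + 2 - n := by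
  unfold muPlusZ halfsq
  rw [if_neg (by omega), if_pos (by omega)]
  push_cast
  ring

lemma V2n2 (n : ℕ) (h : 3 ≤ n) : muPlusZ n (2 * n - 2) = halfsq n + 2 - n := by
  unfold muPlusZ halfsq
  rw [if_neg (by omega), if_pos le_rfl]
  have hc : ((2 * n - 2 : ℕ) : ℤ) = 2 * (n : ℤ) - 2 := by omega
  rw [hc]
  ring

lemma V2n1 (n : ℕ) (h : 3 ≤ n) : muPlusZ n (2 * n - 1) = halfsq n := by
  unfold muPlusZ halfsq
  rw [if_neg (by omega), if_neg (by omega)]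
  have hc : ((2 * n - 1 : ℕ) : ℤ) = 2 * (n : ℤ) - 1 := by omega
  rw [hc]
  congr 1
  ring

lemma V3n2 (n : ℕ) (h : 2 ≤ n) : muPlusZ n (3 * n - 2) = (n : ℤ) - 1 := by
  unfold muPlusZ
  rw [if_neg (by omega), if_neg (by omega)]
  have hc : ((3 * n - 2 : ℕ) : ℤ) = 3 * (n : ℤ) - 2 := by omega
  rw [hc, show (3 * (n:ℤ) - (3 * (n:ℤ) - 2) - 1) * ((3 * (n:ℤ) - 2) - (n:ℤ))
      = 2 * ((n:ℤ) - 1) by ring]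
  exact Int.mul_ediv_cancel_left _ (by norm_num)

end Stmt13Aux

open Polynomial Finset Stmt13Aux

theorem stmt13 (n : ℕ) (hn : 2 ≤ n) :
    (∑ i ∈ Finset.Icc 1 (3 * n - 2),
        Polynomial.C (muPlusZ n i) * Polynomial.X ^ i : Polynomial ℤ)
      = (∑ i ∈ Finset.Icc 1 n, (Polynomial.X : Polynomial ℤ) ^ i) *
          ∑ i ∈ Finset.Icc 1 (n - 1),
            (Polynomial.C ((n : ℤ) - i) * Polynomial.X ^ (i - 1)
              + Polynomial.C (i : ℤ) * Polynomial.X ^ (i + n - 1)) := by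
  rcases Nat.lt_or_ge n 4 with h4 | h4
  · interval_cases n
    · simp only [sum_Icc_eq_sum_range'', show (3*2-2+1-1 : ℕ) = 4 from rfl,
        show (2+1-1 : ℕ) = 2 from rfl, show (2-1+1-1 : ℕ) = 1 from rfl,
        Finset.sum_range_succ, Finset.sum_range_zero,
        show muPlusZ 2 (1+0) = 1 by decide, show muPlusZ 2 (1+1) = 1 by decide,
        show muPlusZ 2 (1+2) = 1 by decide, show muPlusZ 2 (1+3) = 1 by decide]
      norm_num
      ring
    · simp only [sum_Icc_eq_sum_range'', show (3*3-2+1-1 : ℕ) = 7 from rfl,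
        show (3+1-1 : ℕ) = 3 from rfl, show (3-1+1-1 : ℕ) = 2 from rfl,
        Finset.sum_range_succ, Finset.sum_range_zero,
        show muPlusZ 3 (1+0) = 2 by decide, show muPlusZ 3 (1+1) = 3 by decide,
        show muPlusZ 3 (1+2) = 3 by decide, show muPlusZ 3 (1+3) = 2 by decide,
        show muPlusZ 3 (1+4) = 3 by decide, show muPlusZ 3 (1+5) = 3 by decide,
        show muPlusZ 3 (1+6) = 2 by decide]
      norm_num
      ring
  · obtain ⟨k, rfl⟩ : ∃ k, n = k + 4 := ⟨n - 4, by omega⟩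
    clear hn h4
    have hX1 : (1 - X : Polynomial ℤ) ≠ 0 := fun h => by
      simpa using congrArg (Polynomial.eval 0) h
    refine mul_right_cancel₀ (pow_ne_zero 3 hX1) ?_
    -- split of the LHS sum
    have hsplit :
        (∑ i ∈ Finset.Icc 1 (3 * (k+4) - 2),
            Polynomial.C (muPlusZ (k+4) i) * Polynomial.X ^ i : Polynomial ℤ)
          = X * (∑ i ∈ range (k+4), C (muPlusZ (k+4) (1+i)) * X^i)
            + (X^(k+5) * (∑ i ∈ range (k+2), C (muPlusZ (k+4) (k+5+i)) * X^i)
              + X^(2*k+7) * (∑ i ∈ range (k+4), C (muPlusZ (k+4) (2*k+7+i)) * X^i)) := by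
      rw [sum_Icc_eq_sum_range'']
      rw [show 3*(k+4)-2+1-1 = (k+4) + ((k+2) + (k+4)) by omega]
      rw [sum_range_add' _ (k+4) ((k+2)+(k+4)), sum_range_add' _ (k+2) (k+4)]
      congr 1
      · rw [Finset.mul_sum]
        exact Finset.sum_congr rfl fun i _ => by ring
      congr 1
      · rw [Finset.mul_sum]
        refine Finset.sum_congr rfl fun i _ => ?_
        rw [show 1 + (k + 4 + i) = k+5+i by omega]
        ring
      · rw [Finset.mul_sum]
        refine Finset.sum_congr rfl fun i _ => ?_
        rw [show 1 + (k + 4 + (k + 2 + i)) = 2*k+7+i by omega]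
        ring
    -- piece 1
    have h1 : (∑ i ∈ range (k+4), C (muPlusZ (k+4) (1+i)) * X^i) * (1 - X)
        = C (((k+4 : ℕ) : ℤ) - 1) - C (halfsq (k+4)) * X^(k+4)
          + X * ∑ i ∈ range (k+3), C ((((k+4:ℕ):ℤ) - 2) + (-1) * (i:ℤ)) * X^i := by
      have hm := Mlem (fun i => muPlusZ (k+4) (1+i)) (k+3)
      simp only [Nat.add_zero, show (k+3)+1 = k+4 by omega, show 1+(k+3) = k+4 by omega] at hm
      rw [hm, V1 (k+4) (by omega), Vn (k+4), Finset.mul_sum]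
      congr 1
      refine Finset.sum_congr rfl fun i hi => ?_
      rw [show 1 + (i+1) = (1+i)+1 by omega, d1 (k+4) (1+i) (by simp at hi; omega)]
      rw [show ((k+4:ℕ):ℤ) - ((1+i:ℕ):ℤ) - 1 = (((k+4:ℕ):ℤ) - 2) + (-1) * (i:ℤ) by
        push_cast; ring]
      ring
    -- piece 2
    have h2 : (∑ i ∈ range (k+2), C (muPlusZ (k+4) (k+5+i)) * X^i) * (1 - X)
        = C (halfsq (k+4) + 2 - ((k+4:ℕ):ℤ)) - C (halfsq (k+4) + 2 - ((k+4:ℕ):ℤ)) * X^(k+2)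
          + X * ∑ i ∈ range (k+1), C ((4 - ((k+4:ℕ):ℤ)) + 2 * (i:ℤ)) * X^i := by
      have hm := Mlem (fun i => muPlusZ (k+4) (k+5+i)) (k+1)
      simp only [Nat.add_zero, show (k+1)+1 = k+2 by omega,
        show k+5+(k+1) = 2*k+6 by omega] at hm
      have hv1 : muPlusZ (k+4) (k+5) = halfsq (k+4) + 2 - ((k+4:ℕ):ℤ) := by
        rw [show (k+5 : ℕ) = (k+4)+1 by omega]; exact Vn1 (k+4) (by omega)
      have hv2 : muPlusZ (k+4) (2*k+6) = halfsq (k+4) + 2 - ((k+4:ℕ):ℤ) := by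
        rw [show (2*k+6 : ℕ) = 2*(k+4)-2 by omega]; exact V2n2 (k+4) (by omega)
      rw [hm, hv1, hv2, Finset.mul_sum]
      congr 1
      refine Finset.sum_congr rfl fun i hi => ?_
      rw [show k+5+(i+1) = (k+5+i)+1 by omega,
        d2 (k+4) (k+5+i) (by omega) (by simp at hi; omega)]
      rw [show 2 * ((k+5+i:ℕ):ℤ) + 2 - 3 * ((k+4:ℕ):ℤ)
          = (4 - ((k+4:ℕ):ℤ)) + 2 * (i:ℤ) by push_cast; ring]
      ring
    -- piece 3
    have h3 : (∑ i ∈ range (k+4), C (muPlusZ (k+4) (2*k+7+i)) * X^i) * (1 - X)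
        = C (halfsq (k+4)) - C (((k+4:ℕ):ℤ) - 1) * X^(k+4)
          + X * ∑ i ∈ range (k+3), C ((0:ℤ) + (-1) * (i:ℤ)) * X^i := by
      have hm := Mlem (fun i => muPlusZ (k+4) (2*k+7+i)) (k+3)
      simp only [Nat.add_zero, show (k+3)+1 = k+4 by omega,
        show 2*k+7+(k+3) = 3*k+10 by omega] at hm
      have hv1 : muPlusZ (k+4) (2*k+7) = halfsq (k+4) := by
        rw [show (2*k+7 : ℕ) = 2*(k+4)-1 by omega]; exact V2n1 (k+4) (by omega)
      have hv2 : muPlusZ (k+4) (3*k+10) = ((k+4:ℕ):ℤ) - 1 := by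
        rw [show (3*k+10 : ℕ) = 3*(k+4)-2 by omega]; exact V3n2 (k+4) (by omega)
      rw [hm, hv1, hv2, Finset.mul_sum]
      congr 1
      refine Finset.sum_congr rfl fun i hi => ?_
      rw [show 2*k+7+(i+1) = (2*k+7+i)+1 by omega,
        d3 (k+4) (2*k+7+i) (by omega) (by omega)]
      rw [show 2 * ((k+4:ℕ):ℤ) - ((2*k+7+i:ℕ):ℤ) - 1
          = (0:ℤ) + (-1) * (i:ℤ) by push_cast; ring]
      ring
    -- second-level (constant-difference) pieces
    have mm1 := MMlem (((k+4:ℕ):ℤ) - 2) (-1) (k+2)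
    have mm2 := MMlem (4 - ((k+4:ℕ):ℤ)) 2 k
    have mm3 := MMlem (0:ℤ) (-1) (k+2)
    simp only [show (k+2)+1 = k+3 by omega] at mm1 mm3
    -- RHS conversions
    have hS : (∑ i ∈ Finset.Icc 1 (k+4), (X : Polynomial ℤ)^i)
        = X * ∑ i ∈ range (k+4), (X : Polynomial ℤ)^i := by
      rw [sum_Icc_eq_sum_range'', show k+4+1-1 = k+4 by omega, Finset.mul_sum]
      exact Finset.sum_congr rfl fun i _ => by ring
    have hT : (∑ i ∈ Finset.Icc 1 (k+4-1),
          (C (((k+4:ℕ):ℤ) - (i:ℤ)) * X^(i-1) + C (i:ℤ) * X^(i+(k+4)-1)) : Polynomial ℤ)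
        = (∑ i ∈ range (k+3), C ((((k+4:ℕ):ℤ) - 1) + (-1) * (i:ℤ)) * X^i)
          + X^(k+4) * ∑ i ∈ range (k+3), C ((1:ℤ) + 1 * (i:ℤ)) * X^i := by
      rw [show k+4-1 = k+3 by omega, Finset.sum_add_distrib,
        sum_Icc_eq_sum_range'', sum_Icc_eq_sum_range'', show k+3+1-1 = k+3 by omega]
      congr 1
      · refine Finset.sum_congr rfl fun i _ => ?_
        rw [show 1+i-1 = i by omega,
          show ((k+4:ℕ):ℤ) - ((1+i:ℕ):ℤ) = (((k+4:ℕ):ℤ) - 1) + (-1) * (i:ℤ) by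
            push_cast; ring]
      · rw [Finset.mul_sum]
        refine Finset.sum_congr rfl fun i _ => ?_
        rw [show 1+i+(k+4)-1 = (k+4)+i by omega,
          show ((1+i:ℕ):ℤ) = (1:ℤ) + 1 * (i:ℤ) by push_cast; ring, pow_add]
        ring
    have hT1 := MMlem (((k+4:ℕ):ℤ) - 1) (-1) (k+2)
    have hT2 := MMlem (1:ℤ) 1 (k+2)
    simp only [show (k+2)+1 = k+3 by omega] at hT1 hT2
    have g1 : (∑ i ∈ range (k+4), (X : Polynomial ℤ)^i) * (1 - X) = 1 - X^(k+4) := by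
      have := geom_sum_mul (X : Polynomial ℤ) (k+4)
      linear_combination -this
    rw [hsplit, hS, hT]
    linear_combination (norm := (simp only [map_add, map_sub, map_mul, map_neg, map_one,
        map_ofNat, map_natCast, map_intCast, map_zero]; push_cast; ring1))
      (X*(1-X)^2) * h1 + (X^(k+5)*(1-X)^2) * h2 + (X^(2*k+7)*(1-X)^2) * h3
      + X^2 * mm1 + X^(k+6) * mm2 + X^(2*k+8) * mm3
      - (X*((∑ i ∈ range (k+3), C ((((k+4:ℕ):ℤ) - 1) + (-1) * (i:ℤ)) * X^i)
          + X^(k+4) * ∑ i ∈ range (k+3), C ((1:ℤ) + 1 * (i:ℤ)) * X^i)*(1-X)^2) * g1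
      - (X*(1 - X^(k+4))) * hT1 - (X^(k+5)*(1 - X^(k+4))) * hT2
end

section
/- For n ≥ 2 and integers 1 ≤ p < q with p ≤ n, q ≤ p+n-1, the signature of the permutation of {1,…,3n-2} given by the sequence X_1 X_2 X_3, where X_1 = (2,…,p, p+2n-1,…,3n-2), X_2 = (1, p+1,…,q-1, q+n,…,p+2n-2), X_3 = (q,…,q+n-1), equals (-1)^{(p+1-q)n+1}. -/
open Fin.NatCast

private lemma mod_eq_sub' {a L : ℕ} (h1 : L ≤ a) (h2 : a < 2 * L) : a % L = a - L := by
  rw [Nat.mod_eq_sub_mod h1, Nat.mod_eq_of_lt (by omega)]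

private lemma finRotate_pow_val {m k : ℕ} (i : Fin (m + 1)) :
    (((finRotate (m + 1)) ^ k) i : ℕ) = ((i : ℕ) + k) % (m + 1) := by
  induction k generalizing i with
  | zero => simp [Nat.mod_eq_of_lt i.isLt]
  | succ k ih =>
    rw [pow_succ, Equiv.Perm.mul_apply, finRotate_succ_apply, ih, Fin.val_add, Fin.val_one',
      Nat.mod_add_mod, show (i : ℕ) + 1 % (m + 1) + k = 1 % (m + 1) + ((i : ℕ) + k) by ring,
      Nat.mod_add_mod, show 1 + ((i : ℕ) + k) = (i : ℕ) + (k + 1) by ring]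

private def rotEquiv {N L : ℕ} (hLN : L ≤ N) : Fin L ≃ {x : Fin N // (x : ℕ) < L} where
  toFun i := ⟨⟨(i : ℕ), lt_of_lt_of_le i.isLt hLN⟩, i.isLt⟩
  invFun s := ⟨(s.1 : ℕ), s.2⟩
  left_inv i := rfl
  right_inv s := rfl

private def rotPerm (N : ℕ) [NeZero N] (a L k : ℕ) (hLN : L ≤ N) : Equiv.Perm (Fin N) :=
  (Equiv.addRight ((a : ℕ) : Fin N)) * ((finRotate L ^ k).extendDomain (rotEquiv hLN)) *
    (Equiv.addRight ((a : ℕ) : Fin N))⁻¹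

private lemma rotPerm_sign {N : ℕ} [NeZero N] {a L k : ℕ} (hLN : L ≤ N) (hL : 1 ≤ L) :
    Equiv.Perm.sign (rotPerm N a L k hLN) = (-1) ^ (k * (L - 1)) := by
  obtain ⟨m, rfl⟩ : ∃ m, L = m + 1 := ⟨L - 1, by omega⟩
  unfold rotPerm
  rw [map_mul, map_mul, map_inv, Equiv.Perm.sign_extendDomain, map_pow, sign_finRotate]
  rw [mul_comm (Equiv.Perm.sign _), mul_assoc, mul_inv_cancel, mul_one, ← pow_mul]
  rw [Nat.add_sub_cancel, Nat.mul_comm]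

private lemma rotPerm_val {N : ℕ} [NeZero N] {a L k : ℕ} (hLN : L ≤ N) (haL : a + L ≤ N)
    (hL : 1 ≤ L) (x : Fin N) :
    (rotPerm N a L k hLN x : ℕ) =
      if a ≤ (x : ℕ) ∧ (x : ℕ) < a + L then a + (((x : ℕ) - a + k) % L) else (x : ℕ) := by
  obtain ⟨m, rfl⟩ : ∃ m, L = m + 1 := ⟨L - 1, by omega⟩
  have hN : 0 < N := Nat.pos_of_ne_zero (NeZero.ne N)
  have haN : a < N := by omega
  have hval : (((a : ℕ) : Fin N) : ℕ) = a := Fin.val_cast_of_lt haN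
  have hsub : ((x - ((a : ℕ) : Fin N) : Fin N) : ℕ) =
      if a ≤ (x : ℕ) then (x : ℕ) - a else N - a + (x : ℕ) := by
    rw [Fin.sub_def]
    simp only [hval]
    split
    · rw [show N - a + (x : ℕ) = ((x : ℕ) - a) + N by omega, Nat.add_mod_right]
      exact Nat.mod_eq_of_lt (show (x : ℕ) - a < N by omega)
    · exact Nat.mod_eq_of_lt (show N - a + (x : ℕ) < N by omega)
  have hx' : ((Equiv.addRight ((a : ℕ) : Fin N))⁻¹ x) = x - ((a : ℕ) : Fin N) := by
    rw [Equiv.neg_addRight, Equiv.coe_addRight, sub_eq_add_neg]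
  rw [rotPerm, Equiv.Perm.mul_apply, Equiv.Perm.mul_apply, hx']
  by_cases h : a ≤ (x : ℕ) ∧ (x : ℕ) < a + (m + 1)
  · rw [if_pos h]
    rw [if_pos h.1] at hsub
    have hlt : ((x - ((a : ℕ) : Fin N) : Fin N) : ℕ) < m + 1 := by rw [hsub]; omega
    rw [Equiv.Perm.extendDomain_apply_subtype _ (rotEquiv hLN) hlt]
    have hv : ((((finRotate (m + 1) ^ k) ((rotEquiv hLN).symm
        ⟨x - ((a : ℕ) : Fin N), hlt⟩)) : Fin (m + 1)) : ℕ) =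
        (((x : ℕ) - a) + k) % (m + 1) := by
      rw [finRotate_pow_val]
      congr 2
    simp only [Equiv.coe_addRight]
    rw [Fin.val_add]
    have hv2 : (((rotEquiv hLN) ((finRotate (m + 1) ^ k) ((rotEquiv hLN).symm
        ⟨x - ((a : ℕ) : Fin N), hlt⟩)) : Fin N) : ℕ) = (((x : ℕ) - a) + k) % (m + 1) := hv
    rw [hv2, hval, Nat.mod_eq_of_lt (by
      have := Nat.mod_lt (((x : ℕ) - a) + k) (show 0 < m + 1 by omega)
      omega)]
    have := Nat.mod_lt (((x : ℕ) - a) + k) (show 0 < m + 1 by omega)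
    omega
  · rw [if_neg h]
    have hge : ¬ (((x - ((a : ℕ) : Fin N) : Fin N) : ℕ) < m + 1) := by
      by_cases hax : a ≤ (x : ℕ)
      · rw [if_pos hax] at hsub; have := x.isLt; omega
      · rw [if_neg hax] at hsub; omega
    rw [Equiv.Perm.extendDomain_apply_not_subtype _ (rotEquiv hLN) hge]
    simp only [Equiv.coe_addRight]
    simp

theorem stmt16 (n p q : ℕ) (hn : 2 ≤ n) (hp1 : 1 ≤ p) (hpq : p < q) (hpn : p ≤ n)
    (hq : q ≤ p + n - 1)
    (σ : Equiv.Perm (Fin (3 * n - 2)))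
    (hσ : ∀ x : Fin (3 * n - 2), (σ x : ℕ) + 1 =
      if (x : ℕ) + 1 ≤ p - 1 then (x : ℕ) + 2
      else if (x : ℕ) + 1 ≤ n - 1 then (x : ℕ) + 2 * n
      else if (x : ℕ) + 1 = n then 1
      else if (x : ℕ) + 1 ≤ n + q - p - 1 then (x : ℕ) + 1 + p - n
      else if (x : ℕ) + 1 ≤ 2 * n - 2 then (x : ℕ) + 1 + p
      else (x : ℕ) + 1 + q + 1 - 2 * n) :
    Equiv.Perm.sign σ = (-1 : ℤˣ) ^ (((p : ℤ) + 1 - q) * n + 1) := by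
  haveI : NeZero (3 * n - 2) := ⟨by omega⟩
  have hL1 : p ≤ 3 * n - 2 := by omega
  have hL2 : p + 2 * n - q - 1 ≤ 3 * n - 2 := by omega
  have hL3 : 3 * n - p - 1 ≤ 3 * n - 2 := by omega
  have hσeq : σ = rotPerm (3 * n - 2) 0 p 1 hL1 *
      (rotPerm (3 * n - 2) (q - 1) (p + 2 * n - q - 1) n hL2 *
       rotPerm (3 * n - 2) (p - 1) (3 * n - p - 1) (2 * n - 1) hL3) := by
    ext x
    have hx := x.isLt
    have h := hσ x
    simp only [Equiv.Perm.mul_apply]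
    set x3 := rotPerm (3 * n - 2) (p - 1) (3 * n - p - 1) (2 * n - 1) hL3 x with hx3
    set x2 := rotPerm (3 * n - 2) (q - 1) (p + 2 * n - q - 1) n hL2 x3 with hx2
    set x1 := rotPerm (3 * n - 2) 0 p 1 hL1 x2 with hx1
    have h3 := rotPerm_val (a := p - 1) (k := 2 * n - 1) hL3 (by omega) (by omega) x
    rw [← hx3] at h3
    have h2 := rotPerm_val (a := q - 1) (k := n) hL2 (by omega) (by omega) x3
    rw [← hx2] at h2
    have h1 := rotPerm_val (a := 0) (k := 1) hL1 (by omega) (by omega) x2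
    rw [← hx1] at h1
    rcases Nat.lt_or_ge (x : ℕ) (p - 1) with c1 | c1
    · -- R1 : x < p - 1
      rw [if_neg (show ¬(p - 1 ≤ (x : ℕ) ∧ (x : ℕ) < p - 1 + (3 * n - p - 1)) by omega)] at h3
      rw [h3, if_neg (show ¬(q - 1 ≤ (x : ℕ) ∧ (x : ℕ) < q - 1 + (p + 2 * n - q - 1)) by omega)]
        at h2
      rw [h2, if_pos (show 0 ≤ (x : ℕ) ∧ (x : ℕ) < 0 + p by omega),
        Nat.mod_eq_of_lt (show (x : ℕ) - 0 + 1 < p by omega)] at h1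
      rw [if_pos (show (x : ℕ) + 1 ≤ p - 1 by omega)] at h
      omega
    rcases Nat.lt_or_ge (x : ℕ) (n - 1) with c2 | c2
    · -- R2 : p - 1 ≤ x < n - 1
      rw [if_pos (show p - 1 ≤ (x : ℕ) ∧ (x : ℕ) < p - 1 + (3 * n - p - 1) by omega),
        Nat.mod_eq_of_lt (show (x : ℕ) - (p - 1) + (2 * n - 1) < 3 * n - p - 1 by omega)] at h3
      have v3 : (x3 : ℕ) = (x : ℕ) + 2 * n - 1 := by omega
      rw [v3, if_neg (show ¬(q - 1 ≤ (x : ℕ) + 2 * n - 1 ∧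
        (x : ℕ) + 2 * n - 1 < q - 1 + (p + 2 * n - q - 1)) by omega)] at h2
      rw [h2, if_neg (show ¬(0 ≤ (x : ℕ) + 2 * n - 1 ∧ (x : ℕ) + 2 * n - 1 < 0 + p) by omega)]
        at h1
      rw [if_neg (show ¬((x : ℕ) + 1 ≤ p - 1) by omega),
        if_pos (show (x : ℕ) + 1 ≤ n - 1 by omega)] at h
      omega
    rcases Nat.lt_or_ge (x : ℕ) n with c3 | c3
    · -- R3 : x = n - 1
      rw [if_pos (show p - 1 ≤ (x : ℕ) ∧ (x : ℕ) < p - 1 + (3 * n - p - 1) by omega),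
        mod_eq_sub' (show 3 * n - p - 1 ≤ (x : ℕ) - (p - 1) + (2 * n - 1) by omega)
          (show (x : ℕ) - (p - 1) + (2 * n - 1) < 2 * (3 * n - p - 1) by omega)] at h3
      have v3 : (x3 : ℕ) = p - 1 := by omega
      rw [v3, if_neg (show ¬(q - 1 ≤ p - 1 ∧ p - 1 < q - 1 + (p + 2 * n - q - 1)) by omega)] at h2
      rw [h2, if_pos (show 0 ≤ p - 1 ∧ p - 1 < 0 + p by omega),
        mod_eq_sub' (show p ≤ p - 1 - 0 + 1 by omega) (show p - 1 - 0 + 1 < 2 * p by omega)] at h1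
      rw [if_neg (show ¬((x : ℕ) + 1 ≤ p - 1) by omega),
        if_neg (show ¬((x : ℕ) + 1 ≤ n - 1) by omega),
        if_pos (show (x : ℕ) + 1 = n by omega)] at h
      omega
    rcases Nat.lt_or_ge (x : ℕ) (n + q - p - 1) with c4 | c4
    · -- R4 : n ≤ x < n + q - p - 1
      rw [if_pos (show p - 1 ≤ (x : ℕ) ∧ (x : ℕ) < p - 1 + (3 * n - p - 1) by omega),
        mod_eq_sub' (show 3 * n - p - 1 ≤ (x : ℕ) - (p - 1) + (2 * n - 1) by omega)
          (show (x : ℕ) - (p - 1) + (2 * n - 1) < 2 * (3 * n - p - 1) by omega)] at h3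
      have v3 : (x3 : ℕ) = (x : ℕ) + p - n := by omega
      rw [v3, if_neg (show ¬(q - 1 ≤ (x : ℕ) + p - n ∧
        (x : ℕ) + p - n < q - 1 + (p + 2 * n - q - 1)) by omega)] at h2
      rw [h2, if_neg (show ¬(0 ≤ (x : ℕ) + p - n ∧ (x : ℕ) + p - n < 0 + p) by omega)] at h1
      rw [if_neg (show ¬((x : ℕ) + 1 ≤ p - 1) by omega),
        if_neg (show ¬((x : ℕ) + 1 ≤ n - 1) by omega),
        if_neg (show ¬((x : ℕ) + 1 = n) by omega),
        if_pos (show (x : ℕ) + 1 ≤ n + q - p - 1 by omega)] at h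
      omega
    rcases Nat.lt_or_ge (x : ℕ) (2 * n - 2) with c5 | c5
    · -- R5 : n + q - p - 1 ≤ x < 2n - 2
      rw [if_pos (show p - 1 ≤ (x : ℕ) ∧ (x : ℕ) < p - 1 + (3 * n - p - 1) by omega),
        mod_eq_sub' (show 3 * n - p - 1 ≤ (x : ℕ) - (p - 1) + (2 * n - 1) by omega)
          (show (x : ℕ) - (p - 1) + (2 * n - 1) < 2 * (3 * n - p - 1) by omega)] at h3
      have v3 : (x3 : ℕ) = (x : ℕ) + p - n := by omega
      rw [v3, if_pos (show q - 1 ≤ (x : ℕ) + p - n ∧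
          (x : ℕ) + p - n < q - 1 + (p + 2 * n - q - 1) by omega),
        Nat.mod_eq_of_lt (show (x : ℕ) + p - n - (q - 1) + n < p + 2 * n - q - 1 by omega)] at h2
      have v2 : (x2 : ℕ) = (x : ℕ) + p := by omega
      rw [v2, if_neg (show ¬(0 ≤ (x : ℕ) + p ∧ (x : ℕ) + p < 0 + p) by omega)] at h1
      rw [if_neg (show ¬((x : ℕ) + 1 ≤ p - 1) by omega),
        if_neg (show ¬((x : ℕ) + 1 ≤ n - 1) by omega),
        if_neg (show ¬((x : ℕ) + 1 = n) by omega),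
        if_neg (show ¬((x : ℕ) + 1 ≤ n + q - p - 1) by omega),
        if_pos (show (x : ℕ) + 1 ≤ 2 * n - 2 by omega)] at h
      omega
    · -- R6 : 2n - 2 ≤ x
      rw [if_pos (show p - 1 ≤ (x : ℕ) ∧ (x : ℕ) < p - 1 + (3 * n - p - 1) by omega),
        mod_eq_sub' (show 3 * n - p - 1 ≤ (x : ℕ) - (p - 1) + (2 * n - 1) by omega)
          (show (x : ℕ) - (p - 1) + (2 * n - 1) < 2 * (3 * n - p - 1) by omega)] at h3
      have v3 : (x3 : ℕ) = (x : ℕ) + p - n := by omega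
      rw [v3, if_pos (show q - 1 ≤ (x : ℕ) + p - n ∧
          (x : ℕ) + p - n < q - 1 + (p + 2 * n - q - 1) by omega),
        mod_eq_sub' (show p + 2 * n - q - 1 ≤ (x : ℕ) + p - n - (q - 1) + n by omega)
          (show (x : ℕ) + p - n - (q - 1) + n < 2 * (p + 2 * n - q - 1) by omega)] at h2
      have v2 : (x2 : ℕ) = (x : ℕ) + q + 1 - 2 * n := by omega
      rw [v2, if_neg (show ¬(0 ≤ (x : ℕ) + q + 1 - 2 * n ∧
        (x : ℕ) + q + 1 - 2 * n < 0 + p) by omega)] at h1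
      rw [if_neg (show ¬((x : ℕ) + 1 ≤ p - 1) by omega),
        if_neg (show ¬((x : ℕ) + 1 ≤ n - 1) by omega),
        if_neg (show ¬((x : ℕ) + 1 = n) by omega),
        if_neg (show ¬((x : ℕ) + 1 ≤ n + q - p - 1) by omega),
        if_neg (show ¬((x : ℕ) + 1 ≤ 2 * n - 2) by omega)] at h
      omega
  rw [hσeq, map_mul, map_mul, rotPerm_sign hL1 (by omega), rotPerm_sign hL2 (by omega),
    rotPerm_sign hL3 (by omega), ← pow_add, ← pow_add]
  have c1 : ((p - 1 : ℕ) : ℤ) = (p : ℤ) - 1 := by omega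
  have c2 : ((p + 2 * n - q - 1 - 1 : ℕ) : ℤ) = (p : ℤ) + 2 * n - q - 2 := by omega
  have c3 : ((3 * n - p - 1 - 1 : ℕ) : ℤ) = 3 * (n : ℤ) - p - 2 := by omega
  have c4 : ((2 * n - 1 : ℕ) : ℤ) = 2 * (n : ℤ) - 1 := by omega
  have hE : ((1 * (p - 1) + (n * (p + 2 * n - q - 1 - 1) + (2 * n - 1) * (3 * n - p - 1 - 1)) : ℕ) :
      ℤ) = (((p : ℤ) + 1 - q) * n + 1) +
        2 * ((p : ℤ) + 4 * (n : ℤ) ^ 2 - (n : ℤ) * p - 5 * n) := by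
    push_cast [c1, c2, c3, c4]
    ring
  calc (-1 : ℤˣ) ^ (1 * (p - 1) + (n * (p + 2 * n - q - 1 - 1) + (2 * n - 1) * (3 * n - p - 1 - 1)))
      = (-1 : ℤˣ) ^ (((1 * (p - 1) + (n * (p + 2 * n - q - 1 - 1) +
          (2 * n - 1) * (3 * n - p - 1 - 1)) : ℕ)) : ℤ) := (zpow_natCast _ _).symm
    _ = (-1 : ℤˣ) ^ ((((p : ℤ) + 1 - q) * n + 1) +
          2 * ((p : ℤ) + 4 * (n : ℤ) ^ 2 - (n : ℤ) * p - 5 * n)) := by rw [hE]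
    _ = (-1 : ℤˣ) ^ (((p : ℤ) + 1 - q) * n + 1) *
          (-1 : ℤˣ) ^ (2 * ((p : ℤ) + 4 * (n : ℤ) ^ 2 - (n : ℤ) * p - 5 * n)) := zpow_add _ _ _
    _ = (-1 : ℤˣ) ^ (((p : ℤ) + 1 - q) * n + 1) := by
          rw [zpow_mul, show ((-1 : ℤˣ) ^ (2 : ℤ)) = 1 by
            rw [show (2 : ℤ) = ((2 : ℕ) : ℤ) from rfl, zpow_natCast]; decide, one_zpow, mul_one]
end
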